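/- For the lazy cycle walk on ZMod n with stay probability p satisfying 0 < p < 1, the chain mixes to the uniform distribution: for all states i, j ∈ ZMod n, the k-step transition probability μ_k(i)(j) converges to 1/n as k → ∞. -/

import Mathlib

open scoped ENNReal

/-- One step of the lazy cycle walk on `ZMod n` with stay probability `p`:
stay at `i` with probability `p`, move to `i + 1` with probability `1 − p`. -/
noncomputable def lazyStep (n : ℕ) (p : ℝ) (hp : 0 ≤ p) (hp1 : p ≤ 1) (i : ZMod n) :
    PMF (ZMod n) :=
  (PMF.bernoulli (Real.toNNReal (1 - p)) (Real.toNNReal_le_one.mpr (by linarith))).map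
    (fun b => if b then i + 1 else i)

/-- The distribution of the lazy cycle walk after `k` steps started at `i`
(the `k`-fold monadic iterate of the one-step PMF). -/
noncomputable def lazyIter (n : ℕ) (p : ℝ) (hp : 0 ≤ p) (hp1 : p ≤ 1) :
    ℕ → ZMod n → PMF (ZMod n)
  | 0, i => PMF.pure i
  | k + 1, i => (lazyIter n p hp hp1 k i).bind (lazyStep n p hp hp1)

section aux
variable {n : ℕ} {p : ℝ} (hp : 0 ≤ p) (hp1 : p ≤ 1)

lemma lazyStep_apply (m j : ZMod n) :
    lazyStep n p hp hp1 m j =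
      (if m = j then ENNReal.ofReal p else 0) +
      (if m = j - 1 then ENNReal.ofReal (1 - p) else 0) := by
  have h1 : (1 : ℝ≥0∞) - ENNReal.ofReal (1 - p) = ENNReal.ofReal p := by
    rw [← ENNReal.ofReal_one, ← ENNReal.ofReal_sub _ (by linarith)]
    norm_num
  have h1' : ((1 - (1 - p).toNNReal : NNReal) : ℝ≥0∞) = ENNReal.ofReal p := by
    rw [ENNReal.coe_sub, ENNReal.coe_one]; exact h1
  simp only [lazyStep, PMF.map_apply, tsum_bool, PMF.bernoulli_apply, Bool.cond_false,
    Bool.cond_true, if_true, if_false, h1']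
  congr 1
  · congr 1
    simp [eq_comm]
  · congr 1
    rw [eq_iff_iff]
    constructor
    · intro h; rw [h]; ring
    · intro h; rw [h]; ring

lemma bind_step (μ : PMF (ZMod n)) (j : ZMod n) :
    (μ.bind (lazyStep n p hp hp1)) j =
      ENNReal.ofReal p * μ j + ENNReal.ofReal (1 - p) * μ (j - 1) := by
  rw [PMF.bind_apply]
  simp_rw [lazyStep_apply, mul_add, mul_ite, mul_zero]
  rw [ENNReal.tsum_add, tsum_eq_single j (by intro b hb; simp [hb]),
    tsum_eq_single (j - 1) (by intro b hb; simp [hb])]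
  simp [mul_comm]

lemma iter_succ_apply (k : ℕ) (i j : ZMod n) :
    lazyIter n p hp hp1 (k + 1) i j =
      ENNReal.ofReal p * lazyIter n p hp hp1 k i j +
      ENNReal.ofReal (1 - p) * lazyIter n p hp hp1 k i (j - 1) := by
  rw [show lazyIter n p hp hp1 (k+1) i = (lazyIter n p hp hp1 k i).bind (lazyStep n p hp hp1)
    from rfl, bind_step]

/-- translation invariance -/
lemma iter_shift (m : ℕ) (r j : ZMod n) :
    lazyIter n p hp hp1 m r j = lazyIter n p hp hp1 m 0 (j - r) := by
  induction m generalizing j with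
  | zero =>
      show (PMF.pure r) j = (PMF.pure (0 : ZMod n)) (j - r)
      simp [PMF.pure_apply, sub_eq_zero, eq_comm]
  | succ m ih =>
      rw [iter_succ_apply, iter_succ_apply, ih, ih]
      ring_nf

/-- Chapman–Kolmogorov -/
lemma iter_add (k m : ℕ) (i : ZMod n) :
    lazyIter n p hp hp1 (k + m) i =
      (lazyIter n p hp hp1 k i).bind (lazyIter n p hp hp1 m) := by
  induction m with
  | zero => simp [lazyIter]
  | succ m ih =>
      show (lazyIter n p hp hp1 (k + m) i).bind _ = _
      rw [ih, PMF.bind_bind]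
      rfl

end aux

section aux2
variable {n : ℕ} [NeZero n] {p : ℝ} (hp : 0 < p) (hp1 : p < 1)

lemma val_sub_one {x : ZMod n} (hx : x ≠ 0) : (x - 1).val = x.val - 1 := by
  have h1 : 1 ≤ x.val := Nat.one_le_iff_ne_zero.mpr (fun h => hx ((ZMod.val_eq_zero x).mp h))
  have hlt : x.val - 1 < n := lt_of_le_of_lt (Nat.sub_le _ _) (ZMod.val_lt x)
  have : x - 1 = ((x.val - 1 : ℕ) : ZMod n) := by
    push_cast [Nat.cast_sub h1]
    simp [ZMod.natCast_val, ZMod.cast_id]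
  rw [this, ZMod.val_cast_of_lt hlt]

/-- lower bound on m-step transition for reachable states -/
lemma iter_lower (m : ℕ) (x : ZMod n) (hx : x.val ≤ m) :
    ENNReal.ofReal (min p (1 - p) ^ m) ≤ lazyIter n p hp.le hp1.le m 0 x := by
  induction m generalizing x with
  | zero =>
      have : x = 0 := (ZMod.val_eq_zero x).mp (Nat.le_zero.mp hx)
      subst this
      simp [lazyIter, PMF.pure_apply]
  | succ m ih =>
      have hmin0 : 0 ≤ min p (1 - p) := le_min hp.le (by linarith)
      have hkey : ENNReal.ofReal (min p (1 - p) ^ (m + 1)) =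
          ENNReal.ofReal (min p (1 - p)) * ENNReal.ofReal (min p (1 - p) ^ m) := by
        rw [← ENNReal.ofReal_mul hmin0, pow_succ, mul_comm]
      rw [iter_succ_apply, hkey]
      by_cases hc : x.val ≤ m
      · calc ENNReal.ofReal (min p (1-p)) * ENNReal.ofReal (min p (1-p) ^ m)
            ≤ ENNReal.ofReal p * lazyIter n p hp.le hp1.le m 0 x :=
              mul_le_mul' (ENNReal.ofReal_le_ofReal (min_le_left _ _)) (ih x hc)
          _ ≤ _ := le_add_right le_rfl
      · have hx0 : x ≠ 0 := by
          intro h; subst h; simp [ZMod.val_zero] at hc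
        have hval : (x - 1).val ≤ m := by
          rw [val_sub_one hx0]; omega
        calc ENNReal.ofReal (min p (1-p)) * ENNReal.ofReal (min p (1-p) ^ m)
            ≤ ENNReal.ofReal (1 - p) * lazyIter n p hp.le hp1.le m 0 (x - 1) :=
              mul_le_mul' (ENNReal.ofReal_le_ofReal (min_le_right _ _)) (ih _ hval)
          _ ≤ _ := le_add_left le_rfl

end aux2

section aux3
variable {n : ℕ} [NeZero n] {p : ℝ} (hp : 0 ≤ p) (hp1 : p ≤ 1)

/-- row sums of toReal transition probabilities are 1 -/
lemma sum_toReal_one (k : ℕ) (i : ZMod n) :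
    ∑ x : ZMod n, (lazyIter n p hp hp1 k i x).toReal = 1 := by
  rw [← ENNReal.toReal_one, ← (lazyIter n p hp hp1 k i).tsum_coe, tsum_fintype,
    ENNReal.toReal_sum (fun a _ => PMF.apply_ne_top _ _)]

/-- column sums are 1 (double stochasticity) -/
lemma sum_toReal_col_one (m : ℕ) (j : ZMod n) :
    ∑ r : ZMod n, (lazyIter n p hp hp1 m r j).toReal = 1 := by
  simp_rw [iter_shift hp hp1 m _ j]
  rw [Fintype.sum_equiv (Equiv.subLeft j)
    (fun r => (lazyIter n p hp hp1 m 0 (j - r)).toReal)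
    (fun x => (lazyIter n p hp hp1 m 0 x).toReal) (fun x => rfl)]
  exact sum_toReal_one hp hp1 m 0

/-- real-valued Chapman–Kolmogorov -/
lemma toReal_iter_add (k m : ℕ) (i j : ZMod n) :
    (lazyIter n p hp hp1 (k + m) i j).toReal =
      ∑ r : ZMod n, (lazyIter n p hp hp1 k i r).toReal *
        (lazyIter n p hp hp1 m r j).toReal := by
  rw [iter_add, PMF.bind_apply, tsum_fintype,
    ENNReal.toReal_sum (fun a _ => ENNReal.mul_ne_top (PMF.apply_ne_top _ _)
      (PMF.apply_ne_top _ _))]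
  simp [ENNReal.toReal_mul]

/-- single-step of the L1 Doeblin contraction -/
lemma contraction (i : ZMod n) (k m : ℕ) (c : ℝ) (hc0 : 0 ≤ c)
    (hc : ∀ r j : ZMod n, c ≤ (lazyIter n p hp hp1 m r j).toReal) :
    ∑ j : ZMod n, |(lazyIter n p hp hp1 (k + m) i j).toReal - 1/n| ≤
      (1 - n * c) * ∑ j : ZMod n, |(lazyIter n p hp hp1 k i j).toReal - 1/n| := by
  have hn : (0:ℝ) < n := Nat.cast_pos.mpr (Nat.pos_of_ne_zero (NeZero.ne n))
  have hcard : ((Finset.univ : Finset (ZMod n)).card : ℝ) = n := by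
    rw [Finset.card_univ, ZMod.card]
  -- expansion of the deviation
  have hexp : ∀ j : ZMod n, (lazyIter n p hp hp1 (k + m) i j).toReal - 1/n =
      ∑ r : ZMod n, ((lazyIter n p hp hp1 k i r).toReal - 1/n) *
        ((lazyIter n p hp hp1 m r j).toReal - c) := by
    intro j
    have h1 := sum_toReal_one hp hp1 k i
    have h2 := sum_toReal_col_one hp hp1 m j
    have expand : ∀ r : ZMod n,
        ((lazyIter n p hp hp1 k i r).toReal - 1/n) *
          ((lazyIter n p hp hp1 m r j).toReal - c) =
        (lazyIter n p hp hp1 k i r).toReal * (lazyIter n p hp hp1 m r j).toReal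
          - c * (lazyIter n p hp hp1 k i r).toReal
          - (1/n) * (lazyIter n p hp hp1 m r j).toReal + (1/n) * c := fun r => by ring
    rw [toReal_iter_add hp hp1 k m i j]
    rw [Finset.sum_congr rfl (fun r _ => expand r)]
    rw [Finset.sum_add_distrib, Finset.sum_sub_distrib, Finset.sum_sub_distrib,
      ← Finset.mul_sum, ← Finset.mul_sum, h1, h2, Finset.sum_const, nsmul_eq_mul, hcard]
    field_simp
    ring
  calc ∑ j : ZMod n, |(lazyIter n p hp hp1 (k + m) i j).toReal - 1/n|
      ≤ ∑ j : ZMod n, ∑ r : ZMod n,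
          |(lazyIter n p hp hp1 k i r).toReal - 1/n| *
            ((lazyIter n p hp hp1 m r j).toReal - c) := by
        refine Finset.sum_le_sum (fun j _ => ?_)
        rw [hexp j]
        refine (Finset.abs_sum_le_sum_abs _ _).trans (le_of_eq ?_)
        refine Finset.sum_congr rfl (fun r _ => ?_)
        rw [abs_mul, abs_of_nonneg (sub_nonneg.mpr (hc r j))]
    _ = ∑ r : ZMod n, |(lazyIter n p hp hp1 k i r).toReal - 1/n| *
          ∑ j : ZMod n, ((lazyIter n p hp hp1 m r j).toReal - c) := by
        rw [Finset.sum_comm]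
        exact Finset.sum_congr rfl fun r _ => (Finset.mul_sum _ _ _).symm
    _ = (1 - n * c) * ∑ j : ZMod n, |(lazyIter n p hp hp1 k i j).toReal - 1/n| := by
        have hrowc : ∀ r : ZMod n,
            ∑ j : ZMod n, ((lazyIter n p hp hp1 m r j).toReal - c) = 1 - n * c := by
          intro r
          rw [Finset.sum_sub_distrib, sum_toReal_one hp hp1 m r, Finset.sum_const,
            nsmul_eq_mul, hcard]
        rw [Finset.sum_congr rfl (fun r _ => by rw [hrowc r])]
        rw [← Finset.sum_mul, mul_comm]

end aux3

/-- **Mixing of the lazy cycle walk.**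
For `0 < p < 1` the lazy cycle walk on `ZMod n` mixes to the uniform
distribution: for all states `i, j`, the `k`-step transition probability
`μ_k(i)(j)` converges to `1/n` as `k → ∞`. -/
theorem lazy_cycle_mixes_to_uniform (n : ℕ) [NeZero n] (p : ℝ)
    (hp : 0 < p) (hp1 : p < 1) (i j : ZMod n) :
    Filter.Tendsto (fun k : ℕ => lazyIter n p hp.le hp1.le k i j)
      Filter.atTop (nhds ((n : ℝ≥0∞))⁻¹) := by
  have hnpos : 0 < n := Nat.pos_of_ne_zero (NeZero.ne n)
  have hn : (0:ℝ) < n := Nat.cast_pos.mpr hnpos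
  set c : ℝ := min p (1 - p) ^ n with hc_def
  have hmin0 : 0 < min p (1 - p) := lt_min hp (by linarith)
  have hc0 : 0 < c := pow_pos hmin0 n
  -- kernel lower bound
  have hclb : ∀ r x : ZMod n, c ≤ (lazyIter n p hp.le hp1.le n r x).toReal := by
    intro r x
    have h1 := iter_lower hp hp1 n (x - r) (le_of_lt (ZMod.val_lt _))
    rw [iter_shift hp.le hp1.le n r x]
    calc c = (ENNReal.ofReal c).toReal := (ENNReal.toReal_ofReal hc0.le).symm
      _ ≤ _ := ENNReal.toReal_mono (PMF.apply_ne_top _ _) h1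
  set ρ : ℝ := 1 - n * c with hρ_def
  have hρ1 : ρ < 1 := by
    have : 0 < (n:ℝ) * c := mul_pos hn hc0
    simp only [hρ_def]; linarith
  have hρ0 : 0 ≤ ρ := by
    have hcard : ((Finset.univ : Finset (ZMod n)).card : ℝ) = n := by
      rw [Finset.card_univ, ZMod.card]
    have h1 : (n:ℝ) * c = ∑ _x : ZMod n, c := by
      rw [Finset.sum_const, nsmul_eq_mul, hcard]
    have h2 : ∑ _x : ZMod n, c ≤ ∑ x : ZMod n, (lazyIter n p hp.le hp1.le n 0 x).toReal :=
      Finset.sum_le_sum (fun x _ => hclb 0 x)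
    rw [sum_toReal_one hp.le hp1.le n 0] at h2
    simp only [hρ_def]
    rw [h1]; linarith
  set E : ℕ → ℝ := fun k => ∑ x : ZMod n, |(lazyIter n p hp.le hp1.le k i x).toReal - 1/n|
    with hE_def
  have hE0 : ∀ k, 0 ≤ E k := fun k => Finset.sum_nonneg (fun x _ => abs_nonneg _)
  have hmono : ∀ k m, E (k + m) ≤ E k := by
    intro k m
    have h := contraction hp.le hp1.le i k m 0 le_rfl
      (fun r x => ENNReal.toReal_nonneg)
    rw [mul_zero, sub_zero, one_mul] at h
    exact h
  have hcontr : ∀ k, E (k + n) ≤ ρ * E k := fun k =>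
    contraction hp.le hp1.le i k n c hc0.le hclb
  have hgeo : ∀ m, E (m * n) ≤ ρ ^ m * E 0 := by
    intro m
    induction m with
    | zero => simp
    | succ m ih =>
        calc E ((m + 1) * n) = E (m * n + n) := by ring_nf
          _ ≤ ρ * E (m * n) := hcontr _
          _ ≤ ρ * (ρ ^ m * E 0) := by
              exact mul_le_mul_of_nonneg_left ih hρ0
          _ = ρ ^ (m + 1) * E 0 := by ring
  have hbound : ∀ k, E k ≤ ρ ^ (k / n) * E 0 := by
    intro k
    have h1 : k = k / n * n + k % n := by
      rw [Nat.mul_comm]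
      exact (Nat.div_add_mod k n).symm
    calc E k = E (k / n * n + k % n) := by rw [← h1]
      _ ≤ E (k / n * n) := hmono _ _
      _ ≤ ρ ^ (k / n) * E 0 := hgeo _
  have hdiv : Filter.Tendsto (fun k : ℕ => k / n) Filter.atTop Filter.atTop := by
    refine Filter.tendsto_atTop_atTop.mpr (fun b => ⟨b * n, fun k hk => ?_⟩)
    exact (Nat.le_div_iff_mul_le hnpos).mpr hk
  have htend : Filter.Tendsto (fun k : ℕ => ρ ^ (k / n) * E 0) Filter.atTop (nhds 0) := by
    have h1 : Filter.Tendsto (fun m : ℕ => ρ ^ m) Filter.atTop (nhds 0) :=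
      tendsto_pow_atTop_nhds_zero_of_lt_one hρ0 hρ1
    have := (h1.comp hdiv).mul_const (E 0)
    simpa using this
  have hEtend : Filter.Tendsto E Filter.atTop (nhds 0) :=
    squeeze_zero hE0 hbound htend
  have habs : ∀ k, |(lazyIter n p hp.le hp1.le k i j).toReal - 1/n| ≤ E k := by
    intro k
    exact Finset.single_le_sum
      (f := fun x => |(lazyIter n p hp.le hp1.le k i x).toReal - 1/n|)
      (fun x _ => abs_nonneg _) (Finset.mem_univ j)
  have hgj : Filter.Tendsto
      (fun k => |(lazyIter n p hp.le hp1.le k i j).toReal - 1/n|)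
      Filter.atTop (nhds 0) :=
    squeeze_zero (fun k => abs_nonneg _) habs hEtend
  have hreal : Filter.Tendsto (fun k => (lazyIter n p hp.le hp1.le k i j).toReal)
      Filter.atTop (nhds (1/n)) := by
    rw [tendsto_iff_norm_sub_tendsto_zero]
    simpa [Real.norm_eq_abs] using hgj
  have hfinal := ENNReal.tendsto_ofReal hreal
  have heq : (fun k => ENNReal.ofReal ((lazyIter n p hp.le hp1.le k i j).toReal)) =
      (fun k : ℕ => lazyIter n p hp.le hp1.le k i j) := by
    funext k
    exact ENNReal.ofReal_toReal (PMF.apply_ne_top _ _)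
  rw [heq] at hfinal
  convert hfinal using 2
  rw [one_div, ENNReal.ofReal_inv_of_pos hn, ENNReal.ofReal_natCast]
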